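/- Let T, S be bounded linear operators on H admitting A-adjoints T♯, S♯ respectively. Set α₁ = ‖S‖_A·√( w_A(T)² − |‖Re_A(T)‖_A² − ‖Im_A(T)‖_A²|/2 ) and α₂ = ‖T‖_A·√( w_A(S)² − |‖Re_A(S)‖_A² − ‖Im_A(S)‖_A²|/2 ). Then w_A(T∘S ± S∘T) ≤ 2√2 · min{α₁, α₂}, for both choices of sign. -/

import Mathlib

noncomputable section

open Complex ContinuousLinearMap

variable {H : Type*} [NormedAddCommGroup H] [InnerProductSpace ℂ H] [CompleteSpace H]

/-- The `A`-inner product `⟨x, y⟩_A = ⟨A x, y⟩`. -/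
def innA (A : H →L[ℂ] H) (x y : H) : ℂ := @inner ℂ _ _ (A x) y

/-- The `A`-seminorm `‖x‖_A = √⟨A x, x⟩`. -/
def vnormA (A : H →L[ℂ] H) (x : H) : ℝ := Real.sqrt (innA A x x).re

/-- The `A`-operator seminorm `‖T‖_A = sup {‖T x‖_A : ‖x‖_A = 1}`. -/
def opnormA (A T : H →L[ℂ] H) : ℝ :=
  sSup {r : ℝ | ∃ x : H, vnormA A x = 1 ∧ r = vnormA A (T x)}

/-- The `A`-numerical radius `w_A(T) = sup {|⟨T x, x⟩_A| : ‖x‖_A = 1}`. -/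
def wA (A T : H →L[ℂ] H) : ℝ :=
  sSup {r : ℝ | ∃ x : H, vnormA A x = 1 ∧ r = ‖innA A (T x) x‖}

/-- The `A`-numerical range `W_A(T) = {⟨T x, x⟩_A : ‖x‖_A = 1}`. -/
def WA (A T : H →L[ℂ] H) : Set ℂ :=
  {z : ℂ | ∃ x : H, vnormA A x = 1 ∧ z = innA A (T x) x}

/-- `Re_A(T) = (T + T♯)/2`, given an `A`-adjoint `Ts` of `T`. -/
def ReA (T Ts : H →L[ℂ] H) : H →L[ℂ] H := (2 : ℂ)⁻¹ • (T + Ts)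

/-- `Im_A(T) = (T - T♯)/(2i)`, given an `A`-adjoint `Ts` of `T`. -/
def ImA (T Ts : H →L[ℂ] H) : H →L[ℂ] H := (2 * Complex.I)⁻¹ • (T - Ts)

/-- `Ts` is an `A`-adjoint of `T`, i.e. `A ∘ Ts = T* ∘ A`. -/
def IsAAdjoint (A T Ts : H →L[ℂ] H) : Prop :=
  A.comp Ts = (ContinuousLinearMap.adjoint T).comp A


variable {A T Ts S Ss P : H →L[ℂ] H}

set_option linter.unusedSectionVars false

lemma innA_self_nonneg (hA : A.IsPositive) (x : H) : 0 ≤ (innA A x x).re := hA.2 x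

lemma innA_conj_symm (hA : A.IsPositive) (x y : H) :
    innA A y x = (starRingEnd ℂ) (innA A x y) := by
  have h1 : @inner ℂ _ _ (A y) x = @inner ℂ _ _ y (A x) := by
    conv_lhs => rw [← hA.isSelfAdjoint.adjoint_eq]
    exact ContinuousLinearMap.adjoint_inner_left A x y
  simp only [innA]
  rw [h1, ← inner_conj_symm]

lemma innA_self_im (hA : A.IsPositive) (x : H) : (innA A x x).im = 0 := by
  have := innA_conj_symm hA x x
  have h2 := congrArg Complex.im this
  simp at h2
  linarith

lemma vnormA_nonneg (A : H →L[ℂ] H) (x : H) : 0 ≤ vnormA A x := Real.sqrt_nonneg _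

lemma vnormA_sq (hA : A.IsPositive) (x : H) : vnormA A x ^ 2 = (innA A x x).re :=
  Real.sq_sqrt (innA_self_nonneg hA x)

lemma innA_add_left (A : H →L[ℂ] H) (x y z : H) :
    innA A (x + y) z = innA A x z + innA A y z := by
  simp [innA, inner_add_left]

lemma innA_add_right (A : H →L[ℂ] H) (x y z : H) :
    innA A x (y + z) = innA A x y + innA A x z := by
  simp [innA, inner_add_right]

lemma innA_sub_left (A : H →L[ℂ] H) (x y z : H) :
    innA A (x - y) z = innA A x z - innA A y z := by
  simp [innA, inner_sub_left]

lemma innA_sub_right (A : H →L[ℂ] H) (x y z : H) :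
    innA A x (y - z) = innA A x y - innA A x z := by
  simp [innA, inner_sub_right]

lemma innA_smul_left (A : H →L[ℂ] H) (c : ℂ) (x y : H) :
    innA A (c • x) y = (starRingEnd ℂ) c * innA A x y := by
  simp [innA, inner_smul_left, mul_comm]

lemma innA_smul_right (A : H →L[ℂ] H) (c : ℂ) (x y : H) :
    innA A x (c • y) = c * innA A x y := by
  simp [innA, inner_smul_right]

lemma vnormA_smul (hA : A.IsPositive) (c : ℂ) (x : H) :
    vnormA A (c • x) = ‖c‖ * vnormA A x := by
  unfold vnormA
  rw [innA_smul_left, innA_smul_right]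
  rw [← mul_assoc, ← Complex.normSq_eq_conj_mul_self]
  rw [show ((Complex.normSq c : ℂ) * innA A x x).re = Complex.normSq c * (innA A x x).re by
    simp]
  rw [Real.sqrt_mul (Complex.normSq_nonneg c), ← Complex.norm_def]

lemma re_innA_sub_self (hA : A.IsPositive) (u v : H) :
    (innA A (u - v) (u - v)).re
      = (innA A u u).re - 2 * (innA A u v).re + (innA A v v).re := by
  rw [innA_sub_left, innA_sub_right, innA_sub_right, innA_conj_symm hA u v]
  simp
  ring

lemma abs_innA_le (hA : A.IsPositive) (x y : H) :
    ‖innA A x y‖ ≤ vnormA A x * vnormA A y := by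
  set z := innA A x y with hz
  by_cases h0 : z = 0
  · rw [h0]; simpa using mul_nonneg (vnormA_nonneg A x) (vnormA_nonneg A y)
  have ha : 0 ≤ (innA A x x).re := innA_self_nonneg hA x
  have hb : 0 ≤ (innA A y y).re := innA_self_nonneg hA y
  set a := (innA A x x).re with hadef
  set b := (innA A y y).re with hbdef
  have habs : (0:ℝ) < ‖z‖ := by
    simpa using norm_pos_iff.mpr h0
  set w : ℂ := (starRingEnd ℂ) z / (‖z‖ : ℂ) with hw
  have hzc : (‖z‖ : ℂ) ≠ 0 := by
    simpa using ne_of_gt habs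
  have hwz : w * z = (‖z‖ : ℂ) := by
    rw [hw, div_mul_eq_mul_div, mul_comm, Complex.mul_conj]
    rw [Complex.normSq_eq_norm_sq]
    push_cast
    field_simp
  have hnw : Complex.normSq w = 1 := by
    rw [hw, Complex.normSq_div]
    simp [Complex.normSq_eq_norm_sq]
    exact h0
  have key : ∀ t : ℝ, 0 ≤ a - 2 * (t * ‖z‖) + t ^ 2 * b := by
    intro t
    have h := innA_self_nonneg hA (x - ((t : ℂ) * w) • y)
    rw [re_innA_sub_self hA] at h
    have e1 : (innA A x (((t : ℂ) * w) • y)).re = t * ‖z‖ := by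
      rw [innA_smul_right, mul_assoc, hwz, ← Complex.ofReal_mul]
      exact Complex.ofReal_re _
    have e2 : (innA A ((((t : ℂ) * w) • y)) ((((t : ℂ) * w) • y))).re = t ^ 2 * b := by
      rw [innA_smul_left, innA_smul_right, ← mul_assoc, ← Complex.normSq_eq_conj_mul_self,
        Complex.normSq_mul, hnw, Complex.normSq_ofReal]
      rw [Complex.re_ofReal_mul]
      rw [← hbdef]
      ring
    rw [e1, e2] at h
    linarith
  by_cases hb0 : b = 0
  · exfalso
    have h := key ((a + 1) / (2 * ‖z‖))
    rw [hb0] at h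
    have : 2 * ((a + 1) / (2 * ‖z‖) * ‖z‖) = a + 1 := by
      field_simp
    rw [this] at h
    simp at h
    linarith
  · have hbpos : 0 < b := lt_of_le_of_ne hb (Ne.symm hb0)
    have h := key (‖z‖ / b)
    have hsq : ‖z‖ ^ 2 ≤ a * b := by
      have : a - 2 * (‖z‖ / b * ‖z‖)
          + (‖z‖ / b) ^ 2 * b = a - ‖z‖ ^ 2 / b := by
        field_simp
        ring
      rw [this] at h
      have h2 : ‖z‖ ^ 2 / b ≤ a := by linarith
      exact (div_le_iff₀ hbpos).mp h2
    calc ‖z‖ = Real.sqrt (‖z‖ ^ 2) :=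
          (Real.sqrt_sq (norm_nonneg z)).symm
      _ ≤ Real.sqrt (a * b) := Real.sqrt_le_sqrt hsq
      _ = vnormA A x * vnormA A y := by
          rw [Real.sqrt_mul ha, vnormA, vnormA, ← hadef, ← hbdef]

lemma IsAAdjoint.flip (hA : A.IsPositive) (h : IsAAdjoint A T Ts) : IsAAdjoint A Ts T := by
  unfold IsAAdjoint at *
  have h2 := congrArg ContinuousLinearMap.adjoint h
  rw [adjoint_comp, adjoint_comp, adjoint_adjoint, hA.isSelfAdjoint.adjoint_eq] at h2
  exact h2.symm

lemma innA_adj (hA : A.IsPositive) (h : IsAAdjoint A T Ts) (x y : H) :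
    innA A (T x) y = innA A x (Ts y) := by
  have hf := h.flip hA
  unfold IsAAdjoint at hf
  have hx : A (T x) = (ContinuousLinearMap.adjoint Ts) (A x) := by
    have := congrArg (fun (X : H →L[ℂ] H) => X x) hf
    simpa [ContinuousLinearMap.comp_apply] using this
  show @inner ℂ _ _ (A (T x)) y = @inner ℂ _ _ (A x) (Ts y)
  rw [hx]
  exact ContinuousLinearMap.adjoint_inner_left Ts y (A x)

lemma Ax_eq_zero (hA : A.IsPositive) {x : H} (hx : vnormA A x = 0) : A x = 0 := by
  have h0 : (innA A x x).re = 0 := by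
    have := Real.sqrt_eq_zero (innA_self_nonneg hA x) |>.mp hx
    exact this
  have hz : ∀ y : H, innA A x y = 0 := by
    intro y
    have h1 := abs_innA_le hA x y
    rw [vnormA, h0] at h1
    simp at h1
    have h2 : ‖innA A x y‖ = 0 :=
      by rw [h1, norm_zero]
    exact norm_eq_zero.mp h2
  have := hz (A x)
  rw [innA] at this
  exact inner_self_eq_zero.mp this

lemma vnormA_kernel (hA : A.IsPositive) (h : IsAAdjoint A T Ts) {x : H}
    (hx : vnormA A x = 0) : vnormA A (T x) = 0 := by
  have : innA A (T x) (T x) = 0 := by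
    rw [innA_adj hA h, innA, Ax_eq_zero hA hx]
    simp
  rw [vnormA, this]
  simp

lemma isAAdjoint_comp_self (hA : A.IsPositive) (h : IsAAdjoint A T Ts) :
    IsAAdjoint A (Ts.comp T) (Ts.comp T) := by
  have hf := h.flip hA
  unfold IsAAdjoint at *
  rw [adjoint_comp]
  calc A.comp (Ts.comp T) = (A.comp Ts).comp T := by rw [ContinuousLinearMap.comp_assoc]
    _ = ((ContinuousLinearMap.adjoint T).comp A).comp T := by rw [h]
    _ = (ContinuousLinearMap.adjoint T).comp (A.comp T) := by
        rw [ContinuousLinearMap.comp_assoc]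
    _ = (ContinuousLinearMap.adjoint T).comp
          ((ContinuousLinearMap.adjoint Ts).comp A) := by rw [hf]
    _ = ((ContinuousLinearMap.adjoint T).comp (ContinuousLinearMap.adjoint Ts)).comp A := by
        rw [ContinuousLinearMap.comp_assoc]

lemma vnormA_op_bound (hA : A.IsPositive) (h : IsAAdjoint A T Ts) (x : H) :
    vnormA A (T x) ≤ Real.sqrt ‖Ts.comp T‖ * vnormA A x := by
  set B := Ts.comp T with hBdef
  have hB : IsAAdjoint A B B := isAAdjoint_comp_self hA h
  by_cases hx0 : vnormA A x = 0
  · rw [vnormA_kernel hA h hx0, hx0, mul_zero]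
  have hc0 : 0 < vnormA A x := lt_of_le_of_ne (vnormA_nonneg A x) (Ne.symm hx0)
  -- innA shift for powers of B
  have hshift : ∀ (n : ℕ) (u v : H), innA A ((B ^ n) u) v = innA A u ((B ^ n) v) := by
    intro n
    induction n with
    | zero => intro u v; simp
    | succ n ih =>
      intro u v
      have e1 : (B ^ (n+1)) u = (B ^ n) (B u) := by
        rw [pow_succ]
        simp [ContinuousLinearMap.mul_apply]
      have e2 : B ((B ^ n) v) = (B ^ (n+1)) v := by
        rw [pow_succ']
        simp [ContinuousLinearMap.mul_apply]
      rw [e1, ih (B u) v, innA_adj hA hB, e2]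
  set c : ℕ → ℝ := fun n => vnormA A ((B ^ n) x) with hcdef
  have hc_nonneg : ∀ n, 0 ≤ c n := fun n => vnormA_nonneg A _
  have hc0eq : c 0 = vnormA A x := by simp [hcdef]
  have h1 : ∀ n, c n ^ 2 ≤ c (2 * n) * c 0 := by
    intro n
    have e : innA A ((B ^ n) x) ((B ^ n) x) = innA A x ((B ^ (2 * n)) x) := by
      rw [hshift n x ((B ^ n) x)]
      congr 1
      rw [two_mul, pow_add]
      simp [ContinuousLinearMap.mul_apply]
    have : c n ^ 2 = (innA A ((B ^ n) x) ((B ^ n) x)).re := vnormA_sq hA _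
    rw [this, e]
    calc (innA A x ((B ^ (2*n)) x)).re ≤ ‖innA A x ((B ^ (2*n)) x)‖ :=
          Complex.re_le_norm _
      _ ≤ vnormA A x * vnormA A ((B ^ (2*n)) x) := abs_innA_le hA _ _
      _ = c (2 * n) * c 0 := by rw [hc0eq]; ring
  have h2 : ∀ n : ℕ, 0 < n → c n ≤ Real.sqrt ‖A‖ * (‖B‖ ^ n * ‖x‖) := by
    intro n hn
    have hBn : ‖(B ^ n) x‖ ≤ ‖B‖ ^ n * ‖x‖ := by
      calc ‖(B ^ n) x‖ ≤ ‖B ^ n‖ * ‖x‖ := (B ^ n).le_opNorm x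
        _ ≤ ‖B‖ ^ n * ‖x‖ := by
            gcongr
            exact norm_pow_le' B hn
    have : c n ^ 2 ≤ ‖A‖ * (‖B‖ ^ n * ‖x‖) ^ 2 := by
      rw [vnormA_sq hA]
      calc (innA A ((B^n) x) ((B^n) x)).re ≤ ‖innA A ((B^n) x) ((B^n) x)‖ :=
            Complex.re_le_norm _
        _ ≤ ‖A ((B^n) x)‖ * ‖(B^n) x‖ := by
            rw [show innA A ((B^n) x) ((B^n) x)
                = @inner ℂ _ _ (A ((B^n) x)) ((B^n) x) from rfl]
            exact norm_inner_le_norm _ _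
        _ ≤ (‖A‖ * ‖(B^n) x‖) * ‖(B^n) x‖ := by gcongr; exact A.le_opNorm _
        _ ≤ ‖A‖ * (‖B‖ ^ n * ‖x‖) ^ 2 := by
            rw [pow_two, ← mul_assoc]
            gcongr
    calc c n = Real.sqrt (c n ^ 2) := (Real.sqrt_sq (hc_nonneg n)).symm
      _ ≤ Real.sqrt (‖A‖ * (‖B‖ ^ n * ‖x‖) ^ 2) := Real.sqrt_le_sqrt this
      _ = Real.sqrt ‖A‖ * (‖B‖ ^ n * ‖x‖) := by
          rw [Real.sqrt_mul (norm_nonneg A), Real.sqrt_sq (by positivity)]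
  have claim : ∀ k : ℕ, c 1 ^ (2 ^ k) ≤ c (2 ^ k) * c 0 ^ (2 ^ k - 1) := by
    intro k
    induction k with
    | zero => simp
    | succ k ih =>
      have e1 : c 1 ^ (2 ^ (k+1)) = (c 1 ^ (2 ^ k)) ^ 2 := by
        rw [← pow_mul, pow_succ]
      have e2 : (c (2 ^ k) * c 0 ^ (2 ^ k - 1)) ^ 2
          = c (2 ^ k) ^ 2 * c 0 ^ (2 * (2 ^ k - 1)) := by
        rw [mul_pow, ← pow_mul]
        ring_nf
      rw [e1]
      calc (c 1 ^ 2 ^ k) ^ 2 ≤ (c (2 ^ k) * c 0 ^ (2 ^ k - 1)) ^ 2 :=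
            pow_le_pow_left₀ (pow_nonneg (hc_nonneg 1) _) ih 2
        _ = c (2 ^ k) ^ 2 * c 0 ^ (2 * (2 ^ k - 1)) := e2
        _ ≤ (c (2 * 2 ^ k) * c 0) * c 0 ^ (2 * (2 ^ k - 1)) :=
            mul_le_mul_of_nonneg_right (h1 (2 ^ k)) (pow_nonneg (hc_nonneg 0) _)
        _ = c (2 ^ (k+1)) * c 0 ^ (2 ^ (k+1) - 1) := by
            rw [show (2 : ℕ) * 2 ^ k = 2 ^ (k+1) by ring]
            rw [mul_assoc, ← pow_succ']
            congr 2
            have : 1 ≤ 2 ^ k := Nat.one_le_two_pow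
            omega
  -- reduce goal to c 1 ≤ ‖B‖ * c 0
  have hgoal2 : vnormA A (T x) ^ 2 ≤ c 1 * c 0 := by
    have e : innA A (T x) (T x) = innA A x (B x) := by
      rw [innA_adj hA h]
      rfl
    rw [vnormA_sq hA, e]
    calc (innA A x (B x)).re ≤ ‖innA A x (B x)‖ := Complex.re_le_norm _
      _ ≤ vnormA A x * vnormA A (B x) := abs_innA_le hA _ _
      _ = c 1 * c 0 := by
          simp only [hcdef, pow_one, pow_zero, ContinuousLinearMap.one_apply]
          ring
  have hc1 : c 1 ≤ ‖B‖ * c 0 := by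
    by_contra hlt
    push_neg at hlt
    have hBpos : 0 < ‖B‖ := by
      rcases (norm_nonneg B).lt_or_eq with hp | hz
      · exact hp
      · exfalso
        have hB0 : B = 0 := by
          rw [← norm_eq_zero]; exact hz.symm
        have : c 1 = 0 := by
          simp [hcdef, hB0, pow_one, vnormA, innA]
        rw [this] at hlt
        nlinarith [hc_nonneg 0, hc0]
    set D : ℝ := ‖B‖ * c 0 with hD
    have hDpos : 0 < D := mul_pos hBpos hc0
    set r : ℝ := c 1 / D with hr
    have hr1 : 1 < r := (one_lt_div hDpos).mpr hlt
    have hc0pos : 0 < c 0 := by rw [hc0eq]; exact hc0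
    set K : ℝ := Real.sqrt ‖A‖ * ‖x‖ / c 0 with hK
    have hbound : ∀ k : ℕ, r ^ (2 ^ k) ≤ K := by
      intro k
      set m : ℕ := 2 ^ k with hm
      have hm1 : 1 ≤ m := Nat.one_le_two_pow
      have h3 : c 1 ^ m ≤ Real.sqrt ‖A‖ * (‖B‖ ^ m * ‖x‖) * c 0 ^ (m - 1) := by
        calc c 1 ^ m ≤ c m * c 0 ^ (m - 1) := claim k
          _ ≤ Real.sqrt ‖A‖ * (‖B‖ ^ m * ‖x‖) * c 0 ^ (m - 1) :=
              mul_le_mul_of_nonneg_right (h2 m (by positivity)) (pow_nonneg (hc_nonneg 0) _)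
      have hpow : c 0 ^ (m - 1) = c 0 ^ m / c 0 := by
        rw [eq_div_iff hc0pos.ne', ← pow_succ]
        congr 1
        omega
      have h4 : c 1 ^ m ≤ K * D ^ m := by
        rw [hpow] at h3
        rw [hK, hD, mul_pow]
        calc c 1 ^ m ≤ Real.sqrt ‖A‖ * (‖B‖ ^ m * ‖x‖) * (c 0 ^ m / c 0) := h3
          _ = Real.sqrt ‖A‖ * ‖x‖ / c 0 * (‖B‖ ^ m * c 0 ^ m) := by
              field_simp
      rw [hr, div_pow]
      rw [div_le_iff₀ (by positivity)]
      exact h4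
    obtain ⟨N, hN⟩ : ∃ N : ℕ, K < r ^ N := by
      have := tendsto_pow_atTop_atTop_of_one_lt hr1
      rcases (this.eventually_gt_atTop K).exists with ⟨N, hN⟩
      exact ⟨N, hN⟩
    have hNle : r ^ N ≤ r ^ (2 ^ N) :=
      pow_le_pow_right₀ (le_of_lt hr1) (le_of_lt (Nat.lt_two_pow_self (n := N)))
    have := hbound N
    linarith
  -- finish
  have : vnormA A (T x) ^ 2 ≤ ‖B‖ * vnormA A x ^ 2 := by
    calc vnormA A (T x) ^ 2 ≤ c 1 * c 0 := hgoal2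
      _ ≤ (‖B‖ * c 0) * c 0 := mul_le_mul_of_nonneg_right hc1 (hc_nonneg 0)
      _ = ‖B‖ * vnormA A x ^ 2 := by rw [hc0eq]; ring
  calc vnormA A (T x) = Real.sqrt (vnormA A (T x) ^ 2) :=
        (Real.sqrt_sq (vnormA_nonneg A _)).symm
    _ ≤ Real.sqrt (‖B‖ * vnormA A x ^ 2) := Real.sqrt_le_sqrt this
    _ = Real.sqrt ‖B‖ * vnormA A x := by
        rw [Real.sqrt_mul (norm_nonneg B), Real.sqrt_sq (vnormA_nonneg A x)]

lemma opnormA_nonneg (A T : H →L[ℂ] H) : 0 ≤ opnormA A T := by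
  apply Real.sSup_nonneg
  rintro r ⟨x, hx, rfl⟩
  exact vnormA_nonneg A _

lemma wA_nonneg (A T : H →L[ℂ] H) : 0 ≤ wA A T := by
  apply Real.sSup_nonneg
  rintro r ⟨x, hx, rfl⟩
  exact norm_nonneg _

lemma opnormA_bddAbove (hA : A.IsPositive) (h : IsAAdjoint A T Ts) :
    BddAbove {r : ℝ | ∃ x : H, vnormA A x = 1 ∧ r = vnormA A (T x)} := by
  refine ⟨Real.sqrt ‖Ts.comp T‖, ?_⟩
  rintro r ⟨x, hx, rfl⟩
  have := vnormA_op_bound hA h x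
  rwa [hx, mul_one] at this

lemma wA_bddAbove (hA : A.IsPositive) (h : IsAAdjoint A T Ts) :
    BddAbove {r : ℝ | ∃ x : H, vnormA A x = 1 ∧ r = ‖innA A (T x) x‖} := by
  refine ⟨Real.sqrt ‖Ts.comp T‖, ?_⟩
  rintro r ⟨x, hx, rfl⟩
  calc ‖innA A (T x) x‖ ≤ vnormA A (T x) * vnormA A x := abs_innA_le hA _ _
    _ ≤ (Real.sqrt ‖Ts.comp T‖ * vnormA A x) * vnormA A x :=
        mul_le_mul_of_nonneg_right (vnormA_op_bound hA h x) (vnormA_nonneg A x)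
    _ = Real.sqrt ‖Ts.comp T‖ := by rw [hx]; ring

lemma vnormA_le_opnormA (hA : A.IsPositive) (h : IsAAdjoint A T Ts) (x : H) :
    vnormA A (T x) ≤ opnormA A T * vnormA A x := by
  by_cases hx : vnormA A x = 0
  · rw [hx, mul_zero, vnormA_kernel hA h hx]
  · have hpos : 0 < vnormA A x := lt_of_le_of_ne (vnormA_nonneg A x) (Ne.symm hx)
    set c : ℂ := Complex.ofReal ((vnormA A x)⁻¹) with hc
    have habs : ‖c‖ = (vnormA A x)⁻¹ := by
      rw [hc, Complex.norm_real, Real.norm_eq_abs, abs_of_pos (by positivity)]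
    have hunit : vnormA A (c • x) = 1 := by
      rw [vnormA_smul hA, habs, inv_mul_cancel₀ hx]
    have hmem : vnormA A (T (c • x))
        ∈ {r : ℝ | ∃ x : H, vnormA A x = 1 ∧ r = vnormA A (T x)} :=
      ⟨c • x, hunit, rfl⟩
    have hle := le_csSup (opnormA_bddAbove hA h) hmem
    have he : vnormA A (T (c • x)) = (vnormA A x)⁻¹ * vnormA A (T x) := by
      rw [map_smul, vnormA_smul hA, habs]
    rw [he] at hle
    rw [show opnormA A T * vnormA A x = vnormA A x * opnormA A T by ring,
      ← inv_mul_le_iff₀ hpos]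
    exact hle

lemma abs_innA_le_wA (hA : A.IsPositive) (h : IsAAdjoint A T Ts) (x : H) :
    ‖innA A (T x) x‖ ≤ wA A T * vnormA A x ^ 2 := by
  by_cases hx : vnormA A x = 0
  · have h0 : (innA A x x).re = 0 := by rw [← vnormA_sq hA, hx]; ring
    have hz : innA A (T x) x = 0 := by
      have h1 := abs_innA_le hA (T x) x
      rw [hx, mul_zero] at h1
      have h2 : ‖innA A (T x) x‖ = 0 :=
        le_antisymm h1 (norm_nonneg _)
      exact norm_eq_zero.mp h2
    rw [hz]
    simp [hx]
  · have hpos : 0 < vnormA A x := lt_of_le_of_ne (vnormA_nonneg A x) (Ne.symm hx)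
    set c : ℂ := Complex.ofReal ((vnormA A x)⁻¹) with hc
    have habs : ‖c‖ = (vnormA A x)⁻¹ := by
      rw [hc, Complex.norm_real, Real.norm_eq_abs, abs_of_pos (by positivity)]
    have hunit : vnormA A (c • x) = 1 := by
      rw [vnormA_smul hA, habs, inv_mul_cancel₀ hx]
    have hmem : ‖innA A (T (c • x)) (c • x)‖
        ∈ {r : ℝ | ∃ x : H, vnormA A x = 1 ∧ r = ‖innA A (T x) x‖} :=
      ⟨c • x, hunit, rfl⟩
    have hle := le_csSup (wA_bddAbove hA h) hmem
    have he : ‖innA A (T (c • x)) (c • x)‖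
        = ((vnormA A x)⁻¹) ^ 2 * ‖innA A (T x) x‖ := by
      rw [map_smul, innA_smul_left, innA_smul_right]
      rw [norm_mul, norm_mul]
      rw [Complex.norm_conj, habs]
      ring
    rw [he] at hle
    have h2 : ‖innA A (T x) x‖ ≤ wA A T * (vnormA A x ^ 2) := by
      rw [mul_comm (wA A T)]
      rw [← inv_mul_le_iff₀ (by positivity : (0:ℝ) < vnormA A x ^ 2)]
      calc (vnormA A x ^ 2)⁻¹ * ‖innA A (T x) x‖
          = ((vnormA A x)⁻¹) ^ 2 * ‖innA A (T x) x‖ := by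
            rw [inv_pow]
        _ ≤ wA A T := hle
    exact h2

lemma parallelogramA (hA : A.IsPositive) (u v : H) :
    vnormA A (u + v) ^ 2 + vnormA A (u - v) ^ 2
      = 2 * vnormA A u ^ 2 + 2 * vnormA A v ^ 2 := by
  have e : innA A (u + v) (u + v) + innA A (u - v) (u - v)
      = 2 * innA A u u + 2 * innA A v v := by
    rw [innA_add_left, innA_add_right, innA_add_right, innA_sub_left,
      innA_sub_right, innA_sub_right]
    ring
  have := congrArg Complex.re e
  simp only [Complex.add_re, Complex.mul_re] at this
  rw [vnormA_sq hA, vnormA_sq hA, vnormA_sq hA, vnormA_sq hA]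
  simpa using this

lemma opnormA_le_wA_self (hA : A.IsPositive) (hP : IsAAdjoint A P P) :
    opnormA A P ≤ wA A P := by
  apply Real.sSup_le _ (wA_nonneg A P)
  rintro r ⟨u, hu, rfl⟩
  by_cases hPu : vnormA A (P u) = 0
  · rw [hPu]; exact wA_nonneg A P
  have hpos : 0 < vnormA A (P u) := lt_of_le_of_ne (vnormA_nonneg A _) (Ne.symm hPu)
  set c : ℂ := Complex.ofReal ((vnormA A (P u))⁻¹) with hc
  set v : H := c • (P u) with hv
  have habs : ‖c‖ = (vnormA A (P u))⁻¹ := by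
    rw [hc, Complex.norm_real, Real.norm_eq_abs, abs_of_pos (by positivity)]
  have hvunit : vnormA A v = 1 := by
    rw [hv, vnormA_smul hA, habs, inv_mul_cancel₀ hPu]
  have hre : (innA A (P u) v).re = vnormA A (P u) := by
    rw [hv, innA_smul_right]
    rw [show (c * innA A (P u) (P u)).re
        = (vnormA A (P u))⁻¹ * (innA A (P u) (P u)).re by
      rw [hc]; exact Complex.re_ofReal_mul _ _]
    rw [← vnormA_sq hA]
    field_simp
  -- polarization
  have hconj : innA A (P v) u = (starRingEnd ℂ) (innA A (P u) v) := by
    rw [innA_adj hA hP v u, innA_conj_symm hA]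
  have hpol : innA A (P (u + v)) (u + v) - innA A (P (u - v)) (u - v)
      = ((4 * (innA A (P u) v).re : ℝ) : ℂ) := by
    rw [map_add, map_sub, innA_add_left, innA_add_right, innA_add_right,
      innA_sub_left, innA_sub_right, innA_sub_right, hconj]
    have hz : innA A (P u) u + innA A (P u) v + ((starRingEnd ℂ) (innA A (P u) v)
          + innA A (P v) v)
        - (innA A (P u) u - innA A (P u) v - ((starRingEnd ℂ) (innA A (P u) v)
          - innA A (P v) v))
        = 2 * (innA A (P u) v + (starRingEnd ℂ) (innA A (P u) v)) := by ring
    rw [hz, Complex.add_conj]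
    push_cast
    ring_nf
  have hre4 : 4 * (innA A (P u) v).re
      = (innA A (P (u + v)) (u + v)).re - (innA A (P (u - v)) (u - v)).re := by
    have h5 := congrArg Complex.re hpol
    rw [Complex.sub_re, Complex.ofReal_re] at h5
    linarith
  have hb1 := abs_innA_le_wA hA hP (u + v)
  have hb2 := abs_innA_le_wA hA hP (u - v)
  have hpar := parallelogramA hA u v
  rw [hu, hvunit] at hpar
  have hr1 : (innA A (P (u+v)) (u+v)).re ≤ wA A P * vnormA A (u+v) ^ 2 :=
    le_trans (Complex.re_le_norm _) hb1
  have hr2 : -(wA A P * vnormA A (u-v) ^ 2) ≤ (innA A (P (u-v)) (u-v)).re := by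
    have := neg_abs_le ((innA A (P (u-v)) (u-v)).re)
    have habs2 : |(innA A (P (u-v)) (u-v)).re| ≤ ‖innA A (P (u-v)) (u-v)‖ :=
      Complex.abs_re_le_norm _
    nlinarith [hb2]
  have hw := wA_nonneg A P
  nlinarith [hre4, hre, hr1, hr2, hpar]

lemma two_I_inv_eq : ((2:ℂ) * Complex.I)⁻¹ = -(2⁻¹ * Complex.I) := by
  rw [mul_inv, Complex.inv_I]
  ring

lemma star_two_I_inv : (starRingEnd ℂ) (((2:ℂ) * Complex.I)⁻¹) = -((2:ℂ) * Complex.I)⁻¹ := by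
  rw [two_I_inv_eq, map_neg, map_mul, Complex.conj_I, map_inv₀,
    Complex.conj_ofNat]
  ring

lemma star_two_inv : (starRingEnd ℂ) ((2:ℂ)⁻¹) = (2:ℂ)⁻¹ := by
  rw [map_inv₀, Complex.conj_ofNat]

lemma isAAdjoint_ReA (hA : A.IsPositive) (h : IsAAdjoint A T Ts) :
    IsAAdjoint A (ReA T Ts) (ReA T Ts) := by
  have hf := h.flip hA
  unfold IsAAdjoint at *
  have hadj : ContinuousLinearMap.adjoint (ReA T Ts)
      = (2:ℂ)⁻¹ • (ContinuousLinearMap.adjoint T + ContinuousLinearMap.adjoint Ts) := by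
    rw [← ContinuousLinearMap.star_eq_adjoint, ReA, star_smul, star_add,
      ContinuousLinearMap.star_eq_adjoint, ContinuousLinearMap.star_eq_adjoint]
    congr 1
    exact star_two_inv
  rw [hadj, ReA]
  rw [ContinuousLinearMap.comp_smul, ContinuousLinearMap.smul_comp,
    ContinuousLinearMap.comp_add, ContinuousLinearMap.add_comp, h, hf]
  congr 1
  rw [add_comm]

lemma isAAdjoint_ImA (hA : A.IsPositive) (h : IsAAdjoint A T Ts) :
    IsAAdjoint A (ImA T Ts) (ImA T Ts) := by
  have hf := h.flip hA
  unfold IsAAdjoint at *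
  have hadj : ContinuousLinearMap.adjoint (ImA T Ts)
      = (2 * Complex.I)⁻¹ •
        (ContinuousLinearMap.adjoint Ts - ContinuousLinearMap.adjoint T) := by
    rw [← ContinuousLinearMap.star_eq_adjoint, ImA, star_smul, star_sub,
      ContinuousLinearMap.star_eq_adjoint, ContinuousLinearMap.star_eq_adjoint]
    rw [show star ((2 * Complex.I)⁻¹ : ℂ) = -(2 * Complex.I)⁻¹ from star_two_I_inv]
    rw [neg_smul, ← smul_neg]
    congr 1
    abel
  rw [hadj, ImA]
  rw [ContinuousLinearMap.comp_smul, ContinuousLinearMap.smul_comp,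
    ContinuousLinearMap.comp_sub, ContinuousLinearMap.sub_comp, h, hf]

lemma innA_ReA_apply (hA : A.IsPositive) (h : IsAAdjoint A T Ts) (x : H) :
    innA A ((ReA T Ts) x) x = (((innA A (T x) x).re : ℝ) : ℂ) := by
  have hf := h.flip hA
  rw [ReA]
  rw [ContinuousLinearMap.smul_apply, innA_smul_left, ContinuousLinearMap.add_apply,
    innA_add_left, innA_adj hA hf x x, innA_conj_symm hA x (T x)]
  rw [star_two_inv]
  rw [add_comm ((starRingEnd ℂ) (innA A x (T x))) (innA A x (T x)), Complex.add_conj]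
  rw [Complex.conj_re]
  push_cast
  ring

lemma innA_ImA_apply (hA : A.IsPositive) (h : IsAAdjoint A T Ts) (x : H) :
    innA A ((ImA T Ts) x) x = ((-(innA A (T x) x).im : ℝ) : ℂ) := by
  have hf := h.flip hA
  rw [ImA]
  rw [ContinuousLinearMap.smul_apply, innA_smul_left, ContinuousLinearMap.sub_apply,
    innA_sub_left, innA_adj hA hf x x, innA_conj_symm hA x (T x)]
  rw [star_two_I_inv]
  rw [show (starRingEnd ℂ) (innA A x (T x)) - innA A x (T x)
      = -(innA A x (T x) - (starRingEnd ℂ) (innA A x (T x))) by ring, Complex.sub_conj]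
  rw [Complex.conj_im]
  have h2I : ((2:ℂ) * Complex.I) ≠ 0 := by
    simp [Complex.I_ne_zero]
  field_simp
  push_cast
  ring

lemma wA_ReA_le (hA : A.IsPositive) (h : IsAAdjoint A T Ts) :
    wA A (ReA T Ts) ≤ wA A T := by
  apply Real.sSup_le _ (wA_nonneg A T)
  rintro r ⟨x, hx, rfl⟩
  rw [innA_ReA_apply hA h]
  calc ‖(((innA A (T x) x).re : ℝ) : ℂ)‖
      = |(innA A (T x) x).re| := by rw [Complex.norm_real, Real.norm_eq_abs]
    _ ≤ ‖innA A (T x) x‖ := Complex.abs_re_le_norm _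
    _ ≤ wA A T * vnormA A x ^ 2 := abs_innA_le_wA hA h x
    _ = wA A T := by rw [hx]; ring

lemma wA_ImA_le (hA : A.IsPositive) (h : IsAAdjoint A T Ts) :
    wA A (ImA T Ts) ≤ wA A T := by
  apply Real.sSup_le _ (wA_nonneg A T)
  rintro r ⟨x, hx, rfl⟩
  rw [innA_ImA_apply hA h]
  calc ‖((-(innA A (T x) x).im : ℝ) : ℂ)‖
      = |(innA A (T x) x).im| := by rw [Complex.norm_real, Real.norm_eq_abs, abs_neg]
    _ ≤ ‖innA A (T x) x‖ := Complex.abs_im_le_norm _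
    _ ≤ wA A T * vnormA A x ^ 2 := abs_innA_le_wA hA h x
    _ = wA A T := by rw [hx]; ring

lemma opnormA_ReA_le (hA : A.IsPositive) (h : IsAAdjoint A T Ts) :
    opnormA A (ReA T Ts) ≤ wA A T :=
  le_trans (opnormA_le_wA_self hA (isAAdjoint_ReA hA h)) (wA_ReA_le hA h)

lemma opnormA_ImA_le (hA : A.IsPositive) (h : IsAAdjoint A T Ts) :
    opnormA A (ImA T Ts) ≤ wA A T :=
  le_trans (opnormA_le_wA_self hA (isAAdjoint_ImA hA h)) (wA_ImA_le hA h)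

lemma T_eq_PQ (T Ts : H →L[ℂ] H) (x : H) :
    T x = (ReA T Ts) x + Complex.I • ((ImA T Ts) x) := by
  rw [ReA, ImA]
  simp only [ContinuousLinearMap.smul_apply, ContinuousLinearMap.add_apply,
    ContinuousLinearMap.sub_apply, smul_smul]
  rw [show Complex.I * (2 * Complex.I)⁻¹ = 2⁻¹ by
    rw [mul_inv, ← mul_assoc, mul_comm Complex.I, mul_assoc, mul_inv_cancel₀ Complex.I_ne_zero,
      mul_one]]
  module

lemma Ts_eq_PQ (T Ts : H →L[ℂ] H) (x : H) :
    Ts x = (ReA T Ts) x - Complex.I • ((ImA T Ts) x) := by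
  rw [ReA, ImA]
  simp only [ContinuousLinearMap.smul_apply, ContinuousLinearMap.add_apply,
    ContinuousLinearMap.sub_apply, smul_smul]
  rw [show Complex.I * (2 * Complex.I)⁻¹ = 2⁻¹ by
    rw [mul_inv, ← mul_assoc, mul_comm Complex.I, mul_assoc, mul_inv_cancel₀ Complex.I_ne_zero,
      mul_one]]
  module

lemma vnormA_adj_le (hA : A.IsPositive) (h : IsAAdjoint A T Ts) (x : H) :
    vnormA A (Ts x) ≤ opnormA A T * vnormA A x := by
  by_cases ht : vnormA A (Ts x) = 0
  · rw [ht]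
    exact mul_nonneg (opnormA_nonneg A T) (vnormA_nonneg A x)
  have htpos : 0 < vnormA A (Ts x) := lt_of_le_of_ne (vnormA_nonneg A _) (Ne.symm ht)
  have h1 : vnormA A (Ts x) ^ 2 ≤ (opnormA A T * vnormA A x) * vnormA A (Ts x) := by
    rw [vnormA_sq hA]
    rw [innA_adj hA (h.flip hA) x (Ts x)]
    calc (innA A x (T (Ts x))).re ≤ ‖innA A x (T (Ts x))‖ := Complex.re_le_norm _
      _ ≤ vnormA A x * vnormA A (T (Ts x)) := abs_innA_le hA _ _
      _ ≤ vnormA A x * (opnormA A T * vnormA A (Ts x)) :=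
          mul_le_mul_of_nonneg_left (vnormA_le_opnormA hA h _) (vnormA_nonneg A x)
      _ = (opnormA A T * vnormA A x) * vnormA A (Ts x) := by ring
  nlinarith [h1, htpos]

set_option maxHeartbeats 2000000 in
lemma core (hA : A.IsPositive) (hT : IsAAdjoint A T Ts) (hS : IsAAdjoint A S Ss)
    (x : H) (hx : vnormA A x = 1) :
    ‖innA A (T (S x)) x‖ + ‖innA A (S (T x)) x‖
      ≤ 2 * Real.sqrt 2 *
        (opnormA A S *
          Real.sqrt (wA A T ^ 2
            - |opnormA A (ReA T Ts) ^ 2 - opnormA A (ImA T Ts) ^ 2| / 2)) := by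
  set nS := opnormA A S with hnSdef
  set nP := opnormA A (ReA T Ts) with hnPdef
  set nQ := opnormA A (ImA T Ts) with hnQdef
  set w := wA A T with hwdef
  have hnS : 0 ≤ nS := opnormA_nonneg A S
  have hw : 0 ≤ w := wA_nonneg A T
  have hnP0 : 0 ≤ nP := opnormA_nonneg _ _
  have hnQ0 : 0 ≤ nQ := opnormA_nonneg _ _
  have hb1 : ‖innA A (T (S x)) x‖ ≤ nS * vnormA A (Ts x) := by
    rw [innA_adj hA hT]
    calc ‖innA A (S x) (Ts x)‖ ≤ vnormA A (S x) * vnormA A (Ts x) :=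
          abs_innA_le hA _ _
      _ ≤ (nS * vnormA A x) * vnormA A (Ts x) :=
          mul_le_mul_of_nonneg_right (vnormA_le_opnormA hA hS x) (vnormA_nonneg _ _)
      _ = nS * vnormA A (Ts x) := by rw [hx]; ring
  have hb2 : ‖innA A (S (T x)) x‖ ≤ nS * vnormA A (T x) := by
    rw [innA_adj hA hS]
    calc ‖innA A (T x) (Ss x)‖ ≤ vnormA A (T x) * vnormA A (Ss x) :=
          abs_innA_le hA _ _
      _ ≤ vnormA A (T x) * (nS * vnormA A x) :=
          mul_le_mul_of_nonneg_left (vnormA_adj_le hA hS x) (vnormA_nonneg _ _)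
      _ = nS * vnormA A (T x) := by rw [hx]; ring
  have hvI : vnormA A (Complex.I • ((ImA T Ts) x)) = vnormA A ((ImA T Ts) x) := by
    rw [vnormA_smul hA]
    simp
  have hpar2 : vnormA A (T x) ^ 2 + vnormA A (Ts x) ^ 2
      = 2 * vnormA A ((ReA T Ts) x) ^ 2 + 2 * vnormA A ((ImA T Ts) x) ^ 2 := by
    rw [T_eq_PQ T Ts x, Ts_eq_PQ T Ts x, ← hvI]
    exact parallelogramA hA ((ReA T Ts) x) (Complex.I • ((ImA T Ts) x))
  have hpb : vnormA A ((ReA T Ts) x) ≤ nP := by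
    have := vnormA_le_opnormA hA (isAAdjoint_ReA hA hT) x
    rwa [hx, mul_one] at this
  have hqb : vnormA A ((ImA T Ts) x) ≤ nQ := by
    have := vnormA_le_opnormA hA (isAAdjoint_ImA hA hT) x
    rwa [hx, mul_one] at this
  have hPw : nP ≤ w := opnormA_ReA_le hA hT
  have hQw : nQ ≤ w := opnormA_ImA_le hA hT
  set E : ℝ := w ^ 2 - |nP ^ 2 - nQ ^ 2| / 2 with hE
  have hEb : nP ^ 2 + nQ ^ 2 ≤ 2 * E := by
    rcases abs_cases (nP ^ 2 - nQ ^ 2) with ⟨h1, h2⟩ | ⟨h1, h2⟩ <;>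
      (rw [hE, h1]; nlinarith)
  have hE0 : 0 ≤ E := by nlinarith [sq_nonneg nP, sq_nonneg nQ]
  have hab : vnormA A (T x) ^ 2 + vnormA A (Ts x) ^ 2 ≤ 4 * E := by
    rw [hpar2]
    nlinarith [vnormA_nonneg A ((ReA T Ts) x), vnormA_nonneg A ((ImA T Ts) x)]
  set a := vnormA A (T x) with hadef
  set b := vnormA A (Ts x) with hbdef
  have ha0 : 0 ≤ a := vnormA_nonneg _ _
  have hb0 : 0 ≤ b := vnormA_nonneg _ _
  clear_value nS nP nQ w E a b
  have hsum : a + b ≤ 2 * Real.sqrt 2 * Real.sqrt E := by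
    have h2 : (a + b) ^ 2 ≤ 2 * (a ^ 2 + b ^ 2) := by nlinarith [sq_nonneg (a - b)]
    have h3 : (a + b) ^ 2 ≤ 8 * E := by nlinarith
    calc a + b = Real.sqrt ((a + b) ^ 2) := (Real.sqrt_sq (by positivity)).symm
      _ ≤ Real.sqrt (8 * E) := Real.sqrt_le_sqrt h3
      _ = 2 * Real.sqrt 2 * Real.sqrt E := by
          rw [show (8 : ℝ) * E = (2 * Real.sqrt 2) ^ 2 * E by
            rw [mul_pow]
            rw [Real.sq_sqrt (by norm_num : (0:ℝ) ≤ 2)]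
            ring]
          rw [Real.sqrt_mul (by positivity), Real.sqrt_sq (by positivity)]
  calc ‖innA A (T (S x)) x‖ + ‖innA A (S (T x)) x‖
      ≤ nS * b + nS * a := add_le_add hb1 hb2
    _ = nS * (a + b) := by ring
    _ ≤ nS * (2 * Real.sqrt 2 * Real.sqrt E) := mul_le_mul_of_nonneg_left hsum hnS
    _ = 2 * Real.sqrt 2 * (nS * Real.sqrt E) := by ring

theorem stmt18 (A T Ts S Ss : H →L[ℂ] H) (hA : A.IsPositive)
    (hT : IsAAdjoint A T Ts) (hS : IsAAdjoint A S Ss) :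
    wA A (T.comp S + S.comp T) ≤
        2 * Real.sqrt 2 *
          min (opnormA A S *
              Real.sqrt (wA A T ^ 2 - |opnormA A (ReA T Ts) ^ 2 - opnormA A (ImA T Ts) ^ 2| / 2))
            (opnormA A T *
              Real.sqrt (wA A S ^ 2 - |opnormA A (ReA S Ss) ^ 2 - opnormA A (ImA S Ss) ^ 2| / 2)) ∧
      wA A (T.comp S - S.comp T) ≤
        2 * Real.sqrt 2 *
          min (opnormA A S *
              Real.sqrt (wA A T ^ 2 - |opnormA A (ReA T Ts) ^ 2 - opnormA A (ImA T Ts) ^ 2| / 2))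
            (opnormA A T *
              Real.sqrt (wA A S ^ 2 - |opnormA A (ReA S Ss) ^ 2 - opnormA A (ImA S Ss) ^ 2| / 2)) := by
  set α₁ := opnormA A S *
      Real.sqrt (wA A T ^ 2 - |opnormA A (ReA T Ts) ^ 2 - opnormA A (ImA T Ts) ^ 2| / 2) with hα₁
  set α₂ := opnormA A T *
      Real.sqrt (wA A S ^ 2 - |opnormA A (ReA S Ss) ^ 2 - opnormA A (ImA S Ss) ^ 2| / 2) with hα₂
  have hα₁0 : 0 ≤ α₁ := mul_nonneg (opnormA_nonneg A S) (Real.sqrt_nonneg _)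
  have hα₂0 : 0 ≤ α₂ := mul_nonneg (opnormA_nonneg A T) (Real.sqrt_nonneg _)
  have hmin0 : 0 ≤ min α₁ α₂ := le_min hα₁0 hα₂0
  have hrhs0 : 0 ≤ 2 * Real.sqrt 2 * min α₁ α₂ := by positivity
  have hboth : ∀ x : H, vnormA A x = 1 →
      ‖innA A (T (S x)) x‖ + ‖innA A (S (T x)) x‖
        ≤ 2 * Real.sqrt 2 * min α₁ α₂ := by
    intro x hx
    have h1 := core hA hT hS x hx
    have h2 := core hA hS hT x hx
    rcases le_total α₁ α₂ with hc | hc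
    · rw [min_eq_left hc]
      exact h1
    · rw [min_eq_right hc]
      calc ‖innA A (T (S x)) x‖ + ‖innA A (S (T x)) x‖
          = ‖innA A (S (T x)) x‖ + ‖innA A (T (S x)) x‖ := by ring
        _ ≤ 2 * Real.sqrt 2 * α₂ := h2
  constructor
  · apply Real.sSup_le _ hrhs0
    rintro r ⟨x, hx, rfl⟩
    have happ : (T.comp S + S.comp T) x = T (S x) + S (T x) := rfl
    rw [happ, innA_add_left]
    calc ‖innA A (T (S x)) x + innA A (S (T x)) x‖
        ≤ ‖innA A (T (S x)) x‖ + ‖innA A (S (T x)) x‖ :=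
          norm_add_le _ _
      _ ≤ 2 * Real.sqrt 2 * min α₁ α₂ := hboth x hx
  · apply Real.sSup_le _ hrhs0
    rintro r ⟨x, hx, rfl⟩
    have happ : (T.comp S - S.comp T) x = T (S x) - S (T x) := rfl
    rw [happ, innA_sub_left]
    calc ‖innA A (T (S x)) x - innA A (S (T x)) x‖
        ≤ ‖innA A (T (S x)) x‖ + ‖innA A (S (T x)) x‖ := by
          simpa [sub_eq_add_neg] using norm_add_le (innA A (T (S x)) x)
            (-(innA A (S (T x)) x))
      _ ≤ 2 * Real.sqrt 2 * min α₁ α₂ := hboth x hx
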